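/- Let 𝒦 ⊆ {−K,…,K} with |𝒦| ≥ 3, let T be a configuration of particles in Ω admitting no ghost particle with respect to 𝒦, and let μ be a probability measure supported in Ω that is absolutely continuous with respect to the Lebesgue measure on ℝ^{2d}. Then μ({P ∈ Ω : the configuration T ∪ {P} admits at least one ghost particle with respect to 𝒦}) = 0. -/

import Mathlib

open MeasureTheory Complex Real Set

noncomputable section

/-- Phase space: positions and velocities in `ℝ^d`. -/
abbrev PS (d : ℕ) := (Fin d → ℝ) × (Fin d → ℝ)

/-- The phase-space domain `Ω`. -/
def Omega (d K : ℕ) (τ : ℝ) : Set (PS d) :=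
  {p | ∀ k : ℤ, |k| ≤ (K : ℤ) → ∀ j, p.1 j + (k : ℝ) * τ * p.2 j ∈ Set.Icc (0 : ℝ) 1}

/-- The affine set `L_{i,k}` attached to a particle `p₀` and a time sample `k`. -/
def Lset (d K : ℕ) (τ : ℝ) (p₀ : PS d) (k : ℤ) : Set (PS d) :=
  {p ∈ Omega d K τ | ∀ j, (p.1 j - p₀.1 j) + (k : ℝ) * τ * (p.2 j - p₀.2 j) = 0}

/-- `g` is a ghost particle of the configuration `P` with respect to the
set of time samples `Ks`. -/
def IsGhost {d K N : ℕ} (τ : ℝ) (P : Fin N → PS d) (Ks : Finset ℤ) (g : PS d) : Prop :=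
  g ∈ Omega d K τ ∧ ∃ ι : ℤ → Fin N, Set.InjOn ι (Ks : Set ℤ) ∧
    (⋂ k ∈ Ks, Lset d K τ (P (ι k)) k) = {g}

/-- Integral of a complex function against a complex measure, via the Jordan
decompositions of the real and imaginary parts. -/
def cintegral {α : Type*} [MeasurableSpace α] (μ : ComplexMeasure α) (f : α → ℂ) : ℂ :=
  ((∫ x, f x ∂(ComplexMeasure.re μ).toJordanDecomposition.posPart)
      - ∫ x, f x ∂(ComplexMeasure.re μ).toJordanDecomposition.negPart)
    + Complex.I * ((∫ x, f x ∂(ComplexMeasure.im μ).toJordanDecomposition.posPart)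
      - ∫ x, f x ∂(ComplexMeasure.im μ).toJordanDecomposition.negPart)

/-- The total variation norm of a complex measure, defined by duality against
continuous functions bounded by one. -/
def tvNorm {α : Type*} [MeasurableSpace α] [TopologicalSpace α] (μ : ComplexMeasure α) : ℝ :=
  sSup {r | ∃ f : α → ℂ, Continuous f ∧ (∀ x, ‖f x‖ ≤ 1) ∧ r = ‖cintegral μ f‖}

/-- A complex measure is supported on a set `S` if it vanishes on measurable sets
disjoint from `S`. -/
def SupportedOn {α : Type*} [MeasurableSpace α] (μ : ComplexMeasure α) (S : Set α) : Prop :=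
  ∀ t : Set α, MeasurableSet t → Disjoint t S → μ t = 0

/-- The Dirac measure at a point, as a complex measure. -/
def cdirac {α : Type*} [MeasurableSpace α] (a : α) : ComplexMeasure α :=
  (MeasureTheory.Measure.dirac a).toSignedMeasure.toComplexMeasure 0

/-- The test function `p ↦ e^{-2πi l·(x + kτv)}`. -/
def testFn (d : ℕ) (τ : ℝ) (l : Fin d → ℤ) (k : ℤ) : PS d → ℂ :=
  fun p => Complex.exp (-(2 * (π : ℂ) * Complex.I) *
    ∑ j, (l j : ℂ) * ((p.1 j : ℂ) + (k : ℂ) * (τ : ℂ) * (p.2 j : ℂ)))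

/-- The measurement `(𝒢 μ)_{l,k}`. -/
def Gmeas {d : ℕ} (τ : ℝ) (μ : ComplexMeasure (PS d)) (l : Fin d → ℤ) (k : ℤ) : ℂ :=
  cintegral μ (testFn d τ l k)

/-- Two complex measures give the same measurements for all allowed frequencies
`‖l‖_∞ ≤ f_c` and time samples `|k| ≤ K`. -/
def SameMeas {d : ℕ} (K : ℕ) (τ : ℝ) (f_c : ℕ) (μ ν : ComplexMeasure (PS d)) : Prop :=
  ∀ l : Fin d → ℤ, (∀ j, |l j| ≤ (f_c : ℤ)) → ∀ k : ℤ, |k| ≤ (K : ℤ) →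
    Gmeas τ μ l k = Gmeas τ ν l k

/-- The set of allowed frequencies `l ∈ ℤ^d`, `‖l‖_∞ ≤ f_c`. -/
def freqSet (d : ℕ) (f_c : ℕ) : Finset (Fin d → ℤ) :=
  Fintype.piFinset fun _ => Finset.Icc (-(f_c : ℤ)) (f_c : ℤ)

/-- A function on phase space has dynamical form. -/
def DynamicalForm (d K : ℕ) (τ : ℝ) (f_c : ℕ) (q : PS d → ℂ) : Prop :=
  ∃ c : ℤ → (Fin d → ℤ) → ℂ, ∀ p : PS d,
    q p = ∑ k ∈ Finset.Icc (-(K : ℤ)) (K : ℤ), ∑ l ∈ freqSet d f_c,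
      c k l * Complex.exp ((2 * (π : ℂ) * Complex.I) *
        ∑ j, (l j : ℂ) * ((p.1 j : ℂ) + (k : ℂ) * (τ : ℂ) * (p.2 j : ℂ)))

/-- The canonical embedding of `𝕂` (either `ℝ` or `ℂ`) into `ℂ`. -/
def toC {𝕜 : Type*} [RCLike 𝕜] (a : 𝕜) : ℂ :=
  (RCLike.re a : ℝ) + (RCLike.im a : ℝ) * Complex.I


instance PS.haar (d : ℕ) : (volume : Measure (PS d)).IsAddHaarMeasure :=
  Measure.prod.instIsAddHaarMeasure _ _

lemma null_slice (d : ℕ) (j0 : Fin d) (a c : ℝ) :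
    volume {p : PS d | p.1 j0 + a * p.2 j0 = c} = 0 := by
  classical
  set f : PS d →ₗ[ℝ] ℝ :=
    (LinearMap.proj j0).comp (LinearMap.fst ℝ _ _) + a • ((LinearMap.proj j0).comp (LinearMap.snd ℝ _ _)) with hf
  have hfp : ∀ p : PS d, f p = p.1 j0 + a * p.2 j0 := by intro p; simp [hf]
  set s : AffineSubspace ℝ (PS d) :=
    AffineSubspace.comap f.toAffineMap (AffineSubspace.mk' c (⊥ : Submodule ℝ ℝ)) with hs
  have hcoe : (s : Set (PS d)) = {p : PS d | p.1 j0 + a * p.2 j0 = c} := by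
    ext p
    simp [hs, AffineSubspace.mem_comap, AffineSubspace.mem_mk', hfp, sub_eq_zero]
  rw [← hcoe]
  refine Measure.addHaar_affineSubspace _ s ?_
  intro h
  have : ((fun _ => c+1, fun _ => 0) : PS d) ∈ s := h ▸ AffineSubspace.mem_top ℝ _ _
  rw [← AffineSubspace.mem_coe, hcoe] at this
  simp at this


/-- If a configuration `T` admits no ghost particle, then for any
absolutely continuous probability measure `μ` supported in `Ω`, the set of new particles
`P` whose addition to `T` creates a ghost particle is `μ`-null. -/
theorem adding_particle_creates_ghost_is_null
    {d K N : ℕ} (hd : 1 ≤ d) (τ : ℝ) (hτ : 0 < τ)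
    (Ks : Finset ℤ) (hKs : Ks ⊆ Finset.Icc (-(K : ℤ)) (K : ℤ)) (hcard : 3 ≤ Ks.card)
    (P : Fin N → PS d) (hmem : ∀ i, P i ∈ Omega d K τ) (hdist : Function.Injective P)
    (hghost : ∀ g : PS d, ¬ IsGhost (K := K) τ P Ks g)
    (μ : MeasureTheory.Measure (PS d)) [IsProbabilityMeasure μ]
    (hac : μ ≪ (volume : Measure (PS d))) (hsupp : μ (Omega d K τ)ᶜ = 0) :
    μ {p : PS d | p ∈ Omega d K τ ∧
        ∃ g : PS d, IsGhost (K := K) τ (Fin.snoc P p) Ks g} = 0 := by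
  classical
  set j0 : Fin d := ⟨0, hd⟩ with hj0
  set piece : ℤ × ℤ × ℤ × Fin N × Fin N → Set (PS d) := fun q =>
    {p : PS d | p.1 j0 + ((q.1 : ℝ) * τ) * p.2 j0 =
      (((P q.2.2.2.1).1 j0 + (q.2.1 : ℝ) * τ * (P q.2.2.2.1).2 j0) -
        (q.2.1 : ℝ) * τ * ((((P q.2.2.2.1).1 j0 + (q.2.1 : ℝ) * τ * (P q.2.2.2.1).2 j0) -
          ((P q.2.2.2.2).1 j0 + (q.2.2.1 : ℝ) * τ * (P q.2.2.2.2).2 j0)) / (((q.2.1 : ℝ) - (q.2.2.1 : ℝ)) * τ)))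
      + (q.1 : ℝ) * τ * ((((P q.2.2.2.1).1 j0 + (q.2.1 : ℝ) * τ * (P q.2.2.2.1).2 j0) -
          ((P q.2.2.2.2).1 j0 + (q.2.2.1 : ℝ) * τ * (P q.2.2.2.2).2 j0)) / (((q.2.1 : ℝ) - (q.2.2.1 : ℝ)) * τ))} with hpiece
  have hU : μ (⋃ q, piece q) = 0 :=
    measure_iUnion_null fun q => hac (null_slice d j0 _ _)
  refine measure_mono_null ?_ hU
  rintro p ⟨-, g, hgΩ, ι, hinj, hcap⟩
  set Q : Fin (N+1) → PS d := Fin.snoc P p with hQ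
  -- g belongs to each Lset
  have hgmem : ∀ k ∈ Ks, g ∈ Lset d K τ (Q (ι k)) k := by
    intro k hk
    have : g ∈ ⋂ k ∈ Ks, Lset d K τ (Q (ι k)) k := by
      rw [hcap]; exact rfl
    exact Set.mem_iInter₂.mp this k hk
  have hNcard : Ks.card ≤ N + 1 := by
    have := Finset.card_le_card_of_injOn ι (fun k _ => Finset.mem_univ (ι k)) hinj
    simpa using this
  have hN : 2 ≤ N := by omega
  -- some k0 maps to the last index
  have hlast : ∃ k0 ∈ Ks, ι k0 = Fin.last N := by
    by_contra hno
    push_neg at hno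
    apply hghost g
    refine ⟨hgΩ, fun k => if h : ι k = Fin.last N then ⟨0, by omega⟩ else (ι k).castPred h, ?_, ?_⟩
    · intro k hk k' hk' he
      apply hinj hk hk'
      simp only at he
      rw [dif_neg (hno k (Finset.mem_coe.mp hk)), dif_neg (hno k' (Finset.mem_coe.mp hk'))] at he
      have := congrArg Fin.castSucc he
      rwa [Fin.castSucc_castPred, Fin.castSucc_castPred] at this
    · rw [← hcap]
      apply Set.iInter₂_congr
      intro k hk
      simp only
      rw [dif_neg (hno k hk), hQ]
      conv_rhs => rw [← Fin.castSucc_castPred (ι k) (hno k hk), Fin.snoc_castSucc]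
  obtain ⟨k0, hk0, hk0l⟩ := hlast
  -- two other time samples avoiding the last index
  set F : Finset ℤ := Ks.filter (fun k => ¬ ι k = Fin.last N) with hF
  have hFc : 2 ≤ F.card := by
    have h1 : (Ks.filter (fun k => ι k = Fin.last N)).card ≤ 1 := by
      refine Finset.card_le_one.mpr ?_
      intro a ha b hb
      rw [Finset.mem_filter] at ha hb
      exact hinj ha.1 hb.1 (ha.2.trans hb.2.symm)
    have h2 := Finset.card_filter_add_card_filter_not
      (s := Ks) (p := fun k => ι k = Fin.last N)
    have h2' : (Ks.filter (fun k => ι k = Fin.last N)).card + F.card = Ks.card := by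
      rw [hF]; exact h2
    omega
  obtain ⟨ka, hka, kb, hkb, hab⟩ := Finset.one_lt_card.mp (by omega : 1 < F.card)
  rw [hF, Finset.mem_filter] at hka hkb
  obtain ⟨hkaK, hal⟩ := hka
  obtain ⟨hkbK, hbl⟩ := hkb
  set ia : Fin N := (ι ka).castPred hal with hia
  set ib : Fin N := (ι kb).castPred hbl with hib
  -- the three equations at coordinate j0
  have hga : (g.1 j0 - (P ia).1 j0) + (ka : ℝ) * τ * (g.2 j0 - (P ia).2 j0) = 0 := by
    have h := (hgmem ka hkaK).2 j0
    rwa [← Fin.castSucc_castPred (ι ka) hal, hQ, Fin.snoc_castSucc] at h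
  have hgb : (g.1 j0 - (P ib).1 j0) + (kb : ℝ) * τ * (g.2 j0 - (P ib).2 j0) = 0 := by
    have h := (hgmem kb hkbK).2 j0
    rwa [← Fin.castSucc_castPred (ι kb) hbl, hQ, Fin.snoc_castSucc] at h
  have hgp : (g.1 j0 - p.1 j0) + (k0 : ℝ) * τ * (g.2 j0 - p.2 j0) = 0 := by
    have h := (hgmem k0 hk0).2 j0
    rwa [hk0l, hQ, Fin.snoc_last] at h
  -- conclude membership in the covering union
  refine Set.mem_iUnion.mpr ⟨(k0, ka, kb, ia, ib), ?_⟩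
  have hden : ((ka : ℝ) - (kb : ℝ)) ≠ 0 := by
    have : (ka : ℝ) ≠ (kb : ℝ) := by exact_mod_cast hab
    exact sub_ne_zero.mpr this
  have hgv : (((P ia).1 j0 + (ka : ℝ) * τ * (P ia).2 j0) -
      ((P ib).1 j0 + (kb : ℝ) * τ * (P ib).2 j0)) / (((ka : ℝ) - (kb : ℝ)) * τ) = g.2 j0 := by
    rw [div_eq_iff (mul_ne_zero hden hτ.ne')]
    ring_nf
    nlinarith [hga, hgb]
  simp only [hpiece, Set.mem_setOf_eq]
  rw [hgv]
  nlinarith [hga, hgp]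


end
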